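/- The derivative of μ₀(κ; β) = κ/((1+βκ²) tanh κ) with respect to κ equals −κ²(tanh κ + κ(1 − tanh²κ))(β − β_c(κ)) / ((βκ² + 1)² tanh²κ), where β_c(κ) = (sinh(2κ) − 2κ)/(κ²(2κ + sinh(2κ))). -/

import Mathlib

lemma tanh_hasDerivAt (x : ℝ) : HasDerivAt Real.tanh (1 - Real.tanh x ^ 2) x := by
  have h := (Real.hasDerivAt_sinh x).div (Real.hasDerivAt_cosh x) (Real.cosh_pos x).ne'
  have hfun : (fun y => Real.sinh y / Real.cosh y) = Real.tanh := by
    funext y; rw [Real.tanh_eq_sinh_div_cosh]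
  rw [show Real.sinh / Real.cosh = fun y => Real.sinh y / Real.cosh y from rfl, hfun] at h
  refine h.congr_deriv ?_
  have hc := (Real.cosh_pos x).ne'
  rw [Real.tanh_eq_sinh_div_cosh]
  have h1 : Real.cosh x ^ 2 - Real.sinh x ^ 2 = 1 := Real.cosh_sq_sub_sinh_sq x
  field_simp

theorem stmt_4 (β κ : ℝ) (hβ : 0 < β) (hκ : 0 < κ) :
    deriv (fun k : ℝ => k / ((1 + β * k ^ 2) * Real.tanh k)) κ =
      -(κ ^ 2 * (Real.tanh κ + κ * (1 - Real.tanh κ ^ 2)) *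
          (β - (Real.sinh (2 * κ) - 2 * κ) / (κ ^ 2 * (2 * κ + Real.sinh (2 * κ))))) /
        ((β * κ ^ 2 + 1) ^ 2 * Real.tanh κ ^ 2) := by
  have ht : 0 < Real.tanh κ := by
    rw [Real.tanh_eq_sinh_div_cosh]
    exact div_pos (by positivity) (Real.cosh_pos κ)
  have hden : (1 + β * κ ^ 2) * Real.tanh κ ≠ 0 := by positivity
  have hg : HasDerivAt (fun k : ℝ => (1 + β * k ^ 2) * Real.tanh k)
      ((β * (2 * κ)) * Real.tanh κ + (1 + β * κ ^ 2) * (1 - Real.tanh κ ^ 2)) κ := by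
    have h1 : HasDerivAt (fun k : ℝ => 1 + β * k ^ 2) (β * (2 * κ)) κ := by
      have := ((hasDerivAt_pow 2 κ).const_mul β).const_add 1
      simpa using this
    exact h1.mul (tanh_hasDerivAt κ)
  have hf : HasDerivAt (fun k : ℝ => k / ((1 + β * k ^ 2) * Real.tanh k))
      ((1 * ((1 + β * κ ^ 2) * Real.tanh κ) - κ * ((β * (2 * κ)) * Real.tanh κ +
        (1 + β * κ ^ 2) * (1 - Real.tanh κ ^ 2))) / ((1 + β * κ ^ 2) * Real.tanh κ) ^ 2) κ :=
    (hasDerivAt_id κ).div hg hden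
  rw [hf.deriv]
  have hc := (Real.cosh_pos κ).ne'
  have h1 : Real.cosh κ ^ 2 - Real.sinh κ ^ 2 = 1 := Real.cosh_sq_sub_sinh_sq κ
  have hs2 : Real.sinh (2 * κ) = 2 * Real.sinh κ * Real.cosh κ := Real.sinh_two_mul κ
  have hsp : 0 < Real.sinh κ := by positivity
  have hden2 : κ ^ 2 * (2 * κ + Real.sinh (2 * κ)) ≠ 0 := by
    rw [hs2]; positivity
  rw [Real.tanh_eq_sinh_div_cosh, hs2] at *
  field_simp
  ring_nf
  linear_combination (-(4 * β * κ ^ 3 + 2 * β ^ 2 * κ ^ 5 + 2 * κ) * Real.sinh κ * Real.cosh κ) * h1
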